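/- In the setting of the previous lemma, P : X ⊕_f Y → X defined by P(x,y) = x + T y satisfies ‖P(x,y)‖ ≤ ‖(x,y)‖_f for all (x,y), and P(x,0) = x, P(0,y) = T y. -/
import Mathlib


/-- P(x,y) = x + T y is 1-bounded on X ⊕_f Y and satisfies
P(x,0) = x, P(0,y) = T y. -/
theorem stmt_8 {X Y : Type*} [NormedAddCommGroup X] [NormedSpace ℝ X]
    [NormedAddCommGroup Y] [NormedSpace ℝ Y]
    (ε : ℝ) (hε0 : 0 < ε) (hε1 : ε < 1)
    (f : X →ₗ[ℝ] Y) (T : Y →ₗ[ℝ] X)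
    (hf : ∀ x, ‖f x‖ ≤ ‖x‖) (hT : ∀ y, ‖T y‖ ≤ ‖y‖)
    (hTf : ∀ x, ‖T (f x) - x‖ ≤ ε * ‖x‖)
    (N : X × Y → ℝ)
    (hN : N = fun p => sInf {r : ℝ | ∃ w : X, r = ‖p.1 - w‖ + ‖p.2 + f w‖ + ε * ‖w‖}) :
    (∀ (x : X) (y : Y), ‖x + T y‖ ≤ N (x, y)) ∧
    (∀ x : X, x + T 0 = x) ∧ (∀ y : Y, (0 : X) + T y = T y) := by
  refine ⟨?_, fun x => by simp, fun y => by simp⟩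
  intro x y
  rw [hN]
  refine le_csInf ⟨_, ⟨(0 : X), rfl⟩⟩ ?_
  rintro r ⟨w, rfl⟩
  have key : x + T y = (x - w) + T (y + f w) - (T (f w) - w) := by
    simp [map_add]; abel
  calc ‖x + T y‖ = ‖(x - w) + T (y + f w) - (T (f w) - w)‖ := by rw [key]
    _ ≤ ‖(x - w) + T (y + f w)‖ + ‖T (f w) - w‖ := norm_sub_le _ _
    _ ≤ ‖x - w‖ + ‖T (y + f w)‖ + ‖T (f w) - w‖ := by
        gcongr; exact norm_add_le _ _
    _ ≤ ‖x - w‖ + ‖y + f w‖ + ε * ‖w‖ := by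
        gcongr; exacts [hT _, hTf w]
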